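/- Let P be a symmetric positive definite real n×n matrix, A a real n×n matrix, G a real n×r matrix, H₁ a real s×n matrix, and μ, η, γ_f > 0 scalars such that the symmetric (n+r)×(n+r) block matrix [[AᵀP + PA + 2μP + η·γ_f²·H₁ᵀH₁, P·G], [GᵀP, −η·I_r]] is negative definite. Let e : ℝ → ℝⁿ be differentiable and f : ℝ → ℝʳ be such that for all t ≥ 0: e′(t) = A·e(t) + G·f(t) and ‖f(t)‖ ≤ γ_f·‖H₁·e(t)‖. Then e(t) → 0 as t → +∞. -/

import Mathlib

open Matrix

lemma posdef_lower_bound {n : ℕ} (hn : 0 < n) {P : Matrix (Fin n) (Fin n) ℝ} (hP : P.PosDef) :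
    ∃ c > 0, ∀ x : Fin n → ℝ, c * (∑ i, x i ^ 2) ≤ x ⬝ᵥ P *ᵥ x := by
  set Q : (Fin n → ℝ) → ℝ := fun x => x ⬝ᵥ P *ᵥ x with hQ
  have hQcont : Continuous Q := by
    unfold Q
    simp only [dotProduct, mulVec]
    fun_prop
  set S : Set (Fin n → ℝ) := {x | ∑ i, x i ^ 2 = 1} with hS
  have hSclosed : IsClosed S := isClosed_eq (by fun_prop) continuous_const
  have hSbdd : Bornology.IsBounded S := by
    apply Bornology.IsBounded.subset (Metric.isBounded_closedBall (x := (0 : Fin n → ℝ)) (r := 1))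
    intro x hx
    simp only [Metric.mem_closedBall, dist_zero_right]
    rw [pi_norm_le_iff_of_nonneg (by norm_num)]
    intro i
    rw [Real.norm_eq_abs, abs_le]
    have h1 : x i ^ 2 ≤ 1 := by
      rw [← hx]
      exact Finset.single_le_sum (f := fun i => x i ^ 2) (fun j _ => sq_nonneg _) (Finset.mem_univ i)
    constructor <;> nlinarith
  have hScompact : IsCompact S := Metric.isCompact_of_isClosed_isBounded hSclosed hSbdd
  have hSne : S.Nonempty := by
    refine ⟨fun _ => (n : ℝ)⁻¹ * Real.sqrt n, ?_⟩
    have : (0:ℝ) < n := by exact_mod_cast hn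
    simp only [hS, Set.mem_setOf_eq, Finset.sum_const, Finset.card_univ, Fintype.card_fin,
      nsmul_eq_mul]
    rw [mul_pow, Real.sq_sqrt this.le]
    field_simp
  obtain ⟨x₀, hx₀S, hx₀min⟩ := hScompact.exists_isMinOn hSne hQcont.continuousOn
  refine ⟨Q x₀, ?_, ?_⟩
  · have key := fun h => hP.dotProduct_mulVec_pos (x := x₀) h; simp only [star_trivial] at key; apply key
    intro h
    rw [h] at hx₀S
    simp [hS] at hx₀S
  · intro x
    rcases eq_or_ne x 0 with rfl | hx
    · simp [Q, dotProduct]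
    · have hs : 0 < ∑ i, x i ^ 2 := by
        have : ∃ i, x i ≠ 0 := by
          by_contra h; push_neg at h; exact hx (funext h)
        obtain ⟨i, hi⟩ := this
        exact Finset.sum_pos' (fun j _ => sq_nonneg _) ⟨i, Finset.mem_univ i, by positivity⟩
      set s := Real.sqrt (∑ i, x i ^ 2) with hsdef
      have hs0 : 0 < s := Real.sqrt_pos.2 hs
      have hmem : s⁻¹ • x ∈ S := by
        simp only [hS, Set.mem_setOf_eq, Pi.smul_apply, smul_eq_mul, mul_pow]
        rw [← Finset.mul_sum]
        rw [hsdef]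
        rw [inv_pow, Real.sq_sqrt hs.le]
        field_simp
      have hmin : Q x₀ ≤ Q (s⁻¹ • x) := hx₀min hmem
      have hscale : Q (s⁻¹ • x) = s⁻¹ ^ 2 * Q x := by
        simp only [Q, smul_dotProduct, mulVec_smul, dotProduct_smul, smul_eq_mul]
        ring
      rw [hscale] at hmin
      have hs2 : s ^ 2 = ∑ i, x i ^ 2 := Real.sq_sqrt hs.le
      have hQx : Q x = x ⬝ᵥ P *ᵥ x := rfl
      rw [← hs2, ← hQx]
      have h2 : s⁻¹ ^ 2 * s ^ 2 = 1 := by field_simp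
      have h3 := mul_le_mul_of_nonneg_right hmin (sq_nonneg s)
      have h4 : s⁻¹ ^ 2 * Q x * s ^ 2 = Q x := by
        rw [mul_comm (s⁻¹ ^ 2) (Q x), mul_assoc, h2, mul_one]
      linarith

lemma key_quad {n r s : ℕ}
    (P A : Matrix (Fin n) (Fin n) ℝ) (G : Matrix (Fin n) (Fin r) ℝ)
    (H₁ : Matrix (Fin s) (Fin n) ℝ)
    (hPsymm : P.IsSymm)
    (μ η γf : ℝ) (hη : 0 < η)
    (hLMI : (-(Matrix.fromBlocks
        (Aᵀ * P + P * A + (2 * μ) • P + (η * γf ^ 2) • (H₁ᵀ * H₁))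
        (P * G)
        (Gᵀ * P)
        (-(η • (1 : Matrix (Fin r) (Fin r) ℝ))))).PosDef)
    (x : Fin n → ℝ) (y : Fin r → ℝ)
    (hy : y ⬝ᵥ y ≤ γf ^ 2 * ((H₁ *ᵥ x) ⬝ᵥ (H₁ *ᵥ x))) :
    x ⬝ᵥ (Aᵀ * P) *ᵥ x + x ⬝ᵥ (P * A) *ᵥ x + 2 * (x ⬝ᵥ (P * G) *ᵥ y)
      ≤ -((2 * μ) * (x ⬝ᵥ P *ᵥ x)) := by
  set M := Matrix.fromBlocks
        (Aᵀ * P + P * A + (2 * μ) • P + (η * γf ^ 2) • (H₁ᵀ * H₁))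
        (P * G)
        (Gᵀ * P)
        (-(η • (1 : Matrix (Fin r) (Fin r) ℝ))) with hM
  set v : Fin n ⊕ Fin r → ℝ := Sum.elim x y with hv
  have hquad : v ⬝ᵥ M *ᵥ v ≤ 0 := by
    rcases eq_or_ne v 0 with h0 | h0
    · simp [h0]
    · have := hLMI.dotProduct_mulVec_pos h0
      rw [star_trivial] at this
      have : 0 < -(v ⬝ᵥ M *ᵥ v) := by
        simpa [neg_mulVec, dotProduct_neg] using this
      linarith
  -- expand
  have hexp : v ⬝ᵥ M *ᵥ v =
      x ⬝ᵥ (Aᵀ * P) *ᵥ x + x ⬝ᵥ (P * A) *ᵥ x + (2 * μ) * (x ⬝ᵥ P *ᵥ x)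
        + (η * γf ^ 2) * ((H₁ *ᵥ x) ⬝ᵥ (H₁ *ᵥ x))
        + x ⬝ᵥ (P * G) *ᵥ y + y ⬝ᵥ (Gᵀ * P) *ᵥ x - η * (y ⬝ᵥ y) := by
    rw [hM, hv, fromBlocks_mulVec]
    simp only [Sum.elim_comp_inl, Sum.elim_comp_inr]
    rw [sumElim_dotProduct_sumElim]
    simp only [add_mulVec, dotProduct_add, smul_mulVec, dotProduct_smul, neg_mulVec,
      dotProduct_neg, smul_eq_mul]
    have h1 : x ⬝ᵥ (H₁ᵀ * H₁) *ᵥ x = (H₁ *ᵥ x) ⬝ᵥ (H₁ *ᵥ x) := by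
      rw [← mulVec_mulVec, dotProduct_mulVec, vecMul_transpose]
    have h2 : y ⬝ᵥ (1 : Matrix (Fin r) (Fin r) ℝ) *ᵥ y = y ⬝ᵥ y := by rw [one_mulVec]
    rw [h1, h2]
    ring
  have hsym : y ⬝ᵥ (Gᵀ * P) *ᵥ x = x ⬝ᵥ (P * G) *ᵥ y := by
    rw [dotProduct_mulVec, ← mulVec_transpose, transpose_mul, transpose_transpose,
      hPsymm.eq, dotProduct_comm]
  rw [hexp, hsym] at hquad
  nlinarith [hquad, mul_le_mul_of_nonneg_left hy hη.le]

lemma hasDerivAt_quadform {n : ℕ} (P : Matrix (Fin n) (Fin n) ℝ) (e : ℝ → Fin n → ℝ)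
    (t : ℝ) (d : Fin n → ℝ) (hd : HasDerivAt e d t) :
    HasDerivAt (fun t => e t ⬝ᵥ P *ᵥ e t) (d ⬝ᵥ P *ᵥ e t + e t ⬝ᵥ P *ᵥ d) t := by
  have heq : (fun t => e t ⬝ᵥ P *ᵥ e t)
      = fun t => ∑ i, ∑ j, e t i * (P i j * e t j) := by
    funext u
    simp [dotProduct, mulVec, Finset.mul_sum]
  rw [heq]
  have hcomp : ∀ i, HasDerivAt (fun t => e t i) (d i) t := fun i => hasDerivAt_pi.1 hd i
  have h : HasDerivAt (fun t => ∑ i, ∑ j, e t i * (P i j * e t j))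
      (∑ i, ∑ j, (d i * (P i j * e t j) + e t i * (P i j * d j))) t := by
    apply HasDerivAt.fun_sum
    intro i _
    apply HasDerivAt.fun_sum
    intro j _
    exact (hcomp i).mul ((hcomp j).const_mul (P i j))
  convert h using 1
  simp [dotProduct, mulVec, Finset.mul_sum, Finset.sum_add_distrib]

/-- Asymptotic stability conclusion of Theorem 1 of the paper: if
the LMI block matrix is negative definite and the observer error obeys
`e′ = A e + G f` with the Lipschitz bound `‖f(t)‖ ≤ γ_f ‖H₁ e(t)‖` (Euclidean
norms) for all `t ≥ 0`, then `e(t) → 0` as `t → +∞`. -/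
theorem stmt_8 (n r s : ℕ)
    (P A : Matrix (Fin n) (Fin n) ℝ) (G : Matrix (Fin n) (Fin r) ℝ)
    (H₁ : Matrix (Fin s) (Fin n) ℝ)
    (hPsymm : P.IsSymm) (hP : P.PosDef)
    (μ η γf : ℝ) (hμ : 0 < μ) (hη : 0 < η) (hγf : 0 < γf)
    (hLMI : (-(Matrix.fromBlocks
        (Aᵀ * P + P * A + (2 * μ) • P + (η * γf ^ 2) • (H₁ᵀ * H₁))
        (P * G)
        (Gᵀ * P)
        (-(η • (1 : Matrix (Fin r) (Fin r) ℝ))))).PosDef)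
    (e : ℝ → Fin n → ℝ) (f : ℝ → Fin r → ℝ)
    (he : Differentiable ℝ e)
    (hode : ∀ t ≥ (0 : ℝ), deriv e t = A.mulVec (e t) + G.mulVec (f t))
    (hf : ∀ t ≥ (0 : ℝ), Real.sqrt (∑ i, f t i ^ 2) ≤
      γf * Real.sqrt (∑ i, H₁.mulVec (e t) i ^ 2)) :
    Filter.Tendsto e Filter.atTop (nhds 0) := by
  rcases Nat.eq_zero_or_pos n with hn | hn
  · subst hn
    have : e = fun _ => 0 := funext fun t => Subsingleton.elim _ _
    rw [this]
    exact tendsto_const_nhds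
  obtain ⟨c, hc, hcb⟩ := posdef_lower_bound hn hP
  set V : ℝ → ℝ := fun t => e t ⬝ᵥ P *ᵥ e t with hVdef
  have hVderiv : ∀ t, HasDerivAt V (deriv e t ⬝ᵥ P *ᵥ e t + e t ⬝ᵥ P *ᵥ deriv e t) t :=
    fun t => hasDerivAt_quadform P e t _ (he t).hasDerivAt
  have hVdiff : Differentiable ℝ V := fun t => (hVderiv t).differentiableAt
  have hVnonneg : ∀ t, 0 ≤ V t := by
    intro t
    have h1 := hcb (e t)
    have h2 : 0 ≤ ∑ i, e t i ^ 2 := Finset.sum_nonneg fun i _ => sq_nonneg _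
    nlinarith
  -- the squared Lipschitz bound
  have hy2 : ∀ t ≥ (0:ℝ), f t ⬝ᵥ f t ≤ γf ^ 2 * ((H₁ *ᵥ e t) ⬝ᵥ (H₁ *ᵥ e t)) := by
    intro t ht
    have ha : (0:ℝ) ≤ ∑ i, f t i ^ 2 := Finset.sum_nonneg fun i _ => sq_nonneg _
    have hb : (0:ℝ) ≤ ∑ i, (H₁ *ᵥ e t) i ^ 2 := Finset.sum_nonneg fun i _ => sq_nonneg _
    have h := hf t ht
    have hsq := mul_self_le_mul_self (Real.sqrt_nonneg _) h
    rw [Real.mul_self_sqrt ha] at hsq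
    have hrhs : (γf * Real.sqrt (∑ i, (H₁ *ᵥ e t) i ^ 2)) * (γf * Real.sqrt (∑ i, (H₁ *ᵥ e t) i ^ 2))
        = γf ^ 2 * (∑ i, (H₁ *ᵥ e t) i ^ 2) := by
      rw [show (γf * Real.sqrt (∑ i, (H₁ *ᵥ e t) i ^ 2)) * (γf * Real.sqrt (∑ i, (H₁ *ᵥ e t) i ^ 2))
          = γf ^ 2 * (Real.sqrt (∑ i, (H₁ *ᵥ e t) i ^ 2) * Real.sqrt (∑ i, (H₁ *ᵥ e t) i ^ 2)) by ring,
        Real.mul_self_sqrt hb]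
    rw [hrhs] at hsq
    have hd1 : f t ⬝ᵥ f t = ∑ i, f t i ^ 2 := by simp [dotProduct, sq]
    have hd2 : (H₁ *ᵥ e t) ⬝ᵥ (H₁ *ᵥ e t) = ∑ i, (H₁ *ᵥ e t) i ^ 2 := by simp [dotProduct, sq]
    rw [hd1, hd2]
    exact hsq
  have hVle : ∀ t ≥ (0:ℝ), deriv V t ≤ -((2 * μ) * V t) := by
    intro t ht
    rw [(hVderiv t).deriv, hode t ht]
    have h1 : e t ⬝ᵥ (Aᵀ * P) *ᵥ e t = (A *ᵥ e t) ⬝ᵥ P *ᵥ e t := by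
      rw [← mulVec_mulVec, dotProduct_mulVec, vecMul_transpose]
    have h2 : f t ⬝ᵥ (Gᵀ * P) *ᵥ e t = (G *ᵥ f t) ⬝ᵥ P *ᵥ e t := by
      rw [← mulVec_mulVec, dotProduct_mulVec, vecMul_transpose]
    have hsym : f t ⬝ᵥ (Gᵀ * P) *ᵥ e t = e t ⬝ᵥ (P * G) *ᵥ f t := by
      rw [dotProduct_mulVec, ← mulVec_transpose, transpose_mul, transpose_transpose,
        hPsymm.eq, dotProduct_comm]
    have hlhs : (A *ᵥ e t + G *ᵥ f t) ⬝ᵥ P *ᵥ e t + e t ⬝ᵥ P *ᵥ (A *ᵥ e t + G *ᵥ f t)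
        = e t ⬝ᵥ (Aᵀ * P) *ᵥ e t + e t ⬝ᵥ (P * A) *ᵥ e t + 2 * (e t ⬝ᵥ (P * G) *ᵥ f t) := by
      rw [add_dotProduct, mulVec_add, dotProduct_add, h1, ← hsym, h2]
      rw [show e t ⬝ᵥ P *ᵥ (A *ᵥ e t) = e t ⬝ᵥ (P * A) *ᵥ e t by rw [mulVec_mulVec]]
      rw [show e t ⬝ᵥ P *ᵥ (G *ᵥ f t) = e t ⬝ᵥ (P * G) *ᵥ f t by rw [mulVec_mulVec]]
      rw [← hsym, h2]
      ring
    rw [hlhs]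
    exact key_quad P A G H₁ hPsymm μ η γf hη hLMI (e t) (f t) (hy2 t ht)
  -- Lyapunov decay via W = exp(2μt) V
  set W : ℝ → ℝ := fun t => Real.exp ((2 * μ) * t) * V t with hWdef
  have hWderiv : ∀ t, HasDerivAt W
      ((Real.exp ((2 * μ) * t) * ((2 * μ) * 1)) * V t + Real.exp ((2 * μ) * t) * deriv V t) t := by
    intro t
    exact (((hasDerivAt_id t).const_mul (2 * μ)).exp).mul (hVdiff t).hasDerivAt
  have hWanti : AntitoneOn W (Set.Ici (0:ℝ)) := by
    apply antitoneOn_of_deriv_nonpos (convex_Ici 0)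
    · exact (Continuous.mul (by fun_prop) (hVdiff.continuous : Continuous fun t => V t)).continuousOn
    · intro t _
      exact ((hWderiv t).differentiableAt).differentiableWithinAt.differentiableAt
        (Filter.univ_mem' fun _ => trivial) |>.differentiableWithinAt
    · intro t ht
      rw [interior_Ici] at ht
      rw [(hWderiv t).deriv]
      have h1 := hVle t (le_of_lt ht)
      have h2 := hVnonneg t
      have h3 := Real.exp_pos ((2 * μ) * t)
      nlinarith
  have hVbound : ∀ t ≥ (0:ℝ), V t ≤ Real.exp (-((2 * μ) * t)) * V 0 := by
    intro t ht
    have hW := hWanti (Set.self_mem_Ici) (Set.mem_Ici.2 ht) ht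
    have hW0 : W 0 = V 0 := by simp [hWdef]
    rw [hW0] at hW
    have h3 := Real.exp_pos ((2 * μ) * t)
    have hWt : Real.exp ((2 * μ) * t) * V t ≤ V 0 := by simpa [hWdef] using hW
    rw [Real.exp_neg]
    calc V t = (Real.exp ((2 * μ) * t))⁻¹ * (Real.exp ((2 * μ) * t) * V t) := by
          field_simp
      _ ≤ (Real.exp ((2 * μ) * t))⁻¹ * V 0 := mul_le_mul_of_nonneg_left hWt (by positivity)
  -- conclude
  have hexp0 : Filter.Tendsto (fun t => Real.exp (-((2 * μ) * t))) Filter.atTop (nhds 0) := by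
    have h1 : Filter.Tendsto (fun t : ℝ => (2 * μ) * t) Filter.atTop Filter.atTop :=
      Filter.Tendsto.const_mul_atTop (by positivity) Filter.tendsto_id
    exact Real.tendsto_exp_neg_atTop_nhds_zero.comp h1
  have hg0 : Filter.Tendsto (fun t => Real.sqrt ((V 0 / c) * Real.exp (-((2 * μ) * t))))
      Filter.atTop (nhds 0) := by
    have h1 : Filter.Tendsto (fun t => (V 0 / c) * Real.exp (-((2 * μ) * t)))
        Filter.atTop (nhds 0) := by
      simpa using hexp0.const_mul (V 0 / c)
    have := h1.sqrt
    simpa using this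
  rw [tendsto_pi_nhds]
  intro i
  simp only [Pi.zero_apply]
  have hbound : ∀ t ≥ (0:ℝ), |e t i| ≤ Real.sqrt ((V 0 / c) * Real.exp (-((2 * μ) * t))) := by
    intro t ht
    have h1 : c * (e t i) ^ 2 ≤ V t := by
      have h2 : (e t i) ^ 2 ≤ ∑ j, e t j ^ 2 :=
        Finset.single_le_sum (f := fun j => e t j ^ 2) (fun j _ => sq_nonneg _) (Finset.mem_univ i)
      have := hcb (e t)
      nlinarith
    have h3 : (e t i) ^ 2 ≤ (V 0 / c) * Real.exp (-((2 * μ) * t)) := by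
      have h4 := hVbound t ht
      rw [div_mul_eq_mul_div, le_div_iff₀ hc]
      nlinarith
    calc |e t i| = Real.sqrt ((e t i) ^ 2) := (Real.sqrt_sq_eq_abs _).symm
      _ ≤ _ := Real.sqrt_le_sqrt h3
  apply tendsto_of_tendsto_of_tendsto_of_le_of_le' (f := fun t => e t i)
    (g := fun t => -Real.sqrt ((V 0 / c) * Real.exp (-((2 * μ) * t))))
    (h := fun t => Real.sqrt ((V 0 / c) * Real.exp (-((2 * μ) * t))))
    (by simpa using hg0.neg) hg0
  · filter_upwards [Filter.eventually_ge_atTop (0:ℝ)] with t ht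
    exact neg_le_of_abs_le (hbound t ht)
  · filter_upwards [Filter.eventually_ge_atTop (0:ℝ)] with t ht
    exact le_of_abs_le (hbound t ht)
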